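/- The semigroup A presented by ⟨a, b | a*a*b = a⟩ is not LEF. -/

import Mathlib

namespace Stmt3

/-- A semigroup `S` is LEF if for every finite subset `H` of `S` there exist a finite
semigroup `F` and a function `f : S → F` injective on `H` such that
`f (x * y) = f x * f y` whenever `x, y, x * y ∈ H`. -/
def IsLEF (S : Type*) [Semigroup S] : Prop :=
  ∀ H : Finset S, ∃ (F : Type) (_ : Semigroup F) (_ : Fintype F) (f : S → F),
    Set.InjOn f ↑H ∧
      ∀ x ∈ H, ∀ y ∈ H, x * y ∈ H → f (x * y) = f x * f y

/-- The generator `a` of the free semigroup on two generators. -/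
def a : FreeSemigroup (Fin 2) := FreeSemigroup.of 0

/-- The generator `b` of the free semigroup on two generators. -/
def b : FreeSemigroup (Fin 2) := FreeSemigroup.of 1

/-- The defining relation `a * a * b = a`. -/
def rel : FreeSemigroup (Fin 2) → FreeSemigroup (Fin 2) → Prop :=
  fun x y => x = a * a * b ∧ y = a

/-- The semigroup `A = ⟨a, b ∣ a * a * b = a⟩`. -/
def A : Type := (conGen rel).Quotient

instance : Semigroup A := Con.semigroup _

/-! ### Auxiliary results -/

/-- In a finite monoid, `x * x * y = x` implies `x * y * x = x`. -/
theorem key_monoid {M : Type*} [Monoid M] [Finite M] (x y : M)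
    (h : x * x * y = x) : x * y * x = x := by
  -- Step 1: `x ^ (k+1) * y ^ k = x` for all `k`.
  have hpow : ∀ k : ℕ, x ^ (k + 1) * y ^ k = x := by
    intro k
    induction k with
    | zero => simp
    | succ k ih =>
      have e : x ^ (k + 1 + 1) * y ^ (k + 1) = x ^ (k + 1) * y ^ k := by
        rw [pow_succ x (k + 1), pow_succ x k, pow_succ' y k]
        calc x ^ k * x * x * (y * y ^ k)
            = x ^ k * (x * x * y) * y ^ k := by simp only [mul_assoc]
          _ = x ^ k * x * y ^ k := by rw [h]
      rw [e, ih]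
  -- Step 2: pigeonhole on powers of `x`.
  obtain ⟨i, j, hne, heq⟩ := Finite.exists_ne_map_eq_of_infinite (fun n : ℕ => x ^ (n + 1))
  -- reduce to the case `i < j`
  have main : ∀ i j : ℕ, i < j → x ^ (i + 1) = x ^ (j + 1) → x * y * x = x := by
    intro i j hij hpq
    set d : ℕ := j - i with hd
    have hd1 : 1 ≤ d := by omega
    have hji : j + 1 = (i + 1) + d := by omega
    -- x = x ^ (d + 1)
    have h1 : x = x ^ (d + 1) := by
      have h2 : x ^ (i + 1 + 1) = x ^ d * x ^ (i + 1 + 1) := by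
        calc x ^ (i + 1 + 1) = x ^ (i + 1) * x := by rw [pow_succ]
          _ = x ^ (j + 1) * x := by rw [hpq]
          _ = x ^ (i + 1 + d) * x := by rw [hji]
          _ = x ^ d * x ^ (i + 1) * x := by rw [← pow_add, Nat.add_comm d]
          _ = x ^ d * x ^ (i + 1 + 1) := by rw [mul_assoc, ← pow_succ]
      calc x = x ^ (i + 1 + 1) * y ^ (i + 1) := (hpow (i + 1)).symm
        _ = x ^ d * x ^ (i + 1 + 1) * y ^ (i + 1) := by rw [← h2]
        _ = x ^ d * (x ^ (i + 1 + 1) * y ^ (i + 1)) := by rw [mul_assoc]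
        _ = x ^ d * x := by rw [hpow (i + 1)]
        _ = x ^ (d + 1) := by rw [pow_succ]
    -- x = x ^ (2d + 1)
    have h3 : x = x ^ (2 * d + 1) := by
      calc x = x ^ (d + 1) := h1
        _ = x ^ d * x := by rw [pow_succ]
        _ = x ^ d * x ^ (d + 1) := by rw [← h1]
        _ = x ^ (2 * d + 1) := by rw [← pow_add]; ring_nf
    -- conclude
    have hm : 2 * d + 1 = (2 * d - 1) + 1 + 1 := by omega
    calc x * y * x = x ^ (2 * d + 1) * y * x := by rw [← h3]
      _ = x ^ (2 * d - 1) * x * x * y * x := by rw [hm, pow_succ, pow_succ]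
      _ = x ^ (2 * d - 1) * (x * x * y) * x := by simp only [mul_assoc]
      _ = x ^ (2 * d - 1) * x * x := by rw [h]
      _ = x ^ (2 * d + 1) := by rw [hm, pow_succ, pow_succ]
      _ = x := h3.symm
  rcases Nat.lt_or_ge i j with hij | hij
  · exact main i j hij heq
  · have : j < i := by omega
    exact main j i this heq.symm

/-- In a finite semigroup, `x * x * y = x` implies `x * y * x = x`. -/
theorem key_semigroup {F : Type*} [Semigroup F] [Fintype F] (x y : F)
    (h : x * x * y = x) : x * y * x = x := by
  haveI : Finite (WithOne F) := inferInstanceAs (Finite (Option F))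
  have hM : ((x : WithOne F) * x * y) = (x : WithOne F) := by
    rw [← WithOne.coe_mul, ← WithOne.coe_mul, h]
  have := key_monoid (M := WithOne F) x y hM
  rw [← WithOne.coe_mul, ← WithOne.coe_mul, WithOne.coe_inj] at this
  exact this

/-- The model semigroup: maps `ℕ → ℕ` under reversed composition. -/
def S : Type := ℕ → ℕ

instance : Semigroup S where
  mul f g := g ∘ f
  mul_assoc _ _ _ := rfl

/-- Image of `a`: the successor map. -/
def X : S := fun n => n + 1

/-- Image of `b`: predecessor, except `Y 1 = 5`. -/
def Y : S := fun n => if n = 1 then 5 else n - 1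

/-- The evaluation homomorphism. -/
def phi : FreeSemigroup (Fin 2) →ₙ* S :=
  FreeSemigroup.lift (fun i => if i = 0 then X else Y)

lemma phi_a : phi a = X := by
  simp [phi, a, FreeSemigroup.lift_of]

lemma phi_b : phi b = Y := by
  simp [phi, b, FreeSemigroup.lift_of]

lemma hXXY : X * X * Y = X := by
  funext n
  show Y (X (X n)) = X n
  simp [X, Y]

lemma hXYX : X * Y * X ≠ X := by
  intro hc
  have h0 : X (Y (X 0)) = X 0 := congrFun hc 0
  simp [X, Y] at h0

/-- The words `a * b * a` and `a` are not identified in `A`. -/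
lemma aba_ne : ¬ (conGen rel) (a * b * a) a := by
  intro hcon
  have hle : conGen rel ≤ Con.ker phi := by
    apply Con.conGen_le.2
    rintro u v ⟨hu, hv⟩
    subst hu; subst hv
    show phi (a * a * b) = phi a
    rw [map_mul, map_mul, phi_a, phi_b, hXXY]
  have heq : phi (a * b * a) = phi a := hle hcon
  rw [map_mul, map_mul, phi_a, phi_b] at heq
  exact hXYX heq

/-- The semigroup `A = ⟨a, b ∣ aab = a⟩` is not LEF. -/
theorem A_not_isLEF : ¬ IsLEF A := by
  classical
  intro hlef
  let α : A := ((a : FreeSemigroup (Fin 2)) : (conGen rel).Quotient)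
  let β : A := ((b : FreeSemigroup (Fin 2)) : (conGen rel).Quotient)
  -- multiplication is compatible with the quotient map
  have hmul : ∀ u v : FreeSemigroup (Fin 2),
      ((u * v : FreeSemigroup (Fin 2)) : (conGen rel).Quotient) =
        (((u : (conGen rel).Quotient) : A) * ((v : (conGen rel).Quotient) : A)) :=
    fun u v => Con.coe_mul u v
  -- the defining relation in A
  have hrel : α * α * β = α := by
    show ((a : (conGen rel).Quotient) : A) * ((a : (conGen rel).Quotient) : A) *
        ((b : (conGen rel).Quotient) : A) = ((a : (conGen rel).Quotient) : A)
    rw [← hmul, ← hmul]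
    exact (Con.eq _).2 (ConGen.Rel.of _ _ ⟨rfl, rfl⟩)
  -- aba ≠ a in A
  have hne : α * β * α ≠ α := by
    intro hc
    apply aba_ne
    apply (Con.eq (conGen rel)).1
    exact Eq.trans (b := α * β * α) (by rw [hmul, hmul]; rfl) hc
  -- apply LEF to the finite set H
  let H : Finset A := {α, α * α, β, α * β, α * β * α}
  obtain ⟨F, _, _, f, hinj, hf⟩ := hlef H
  have mα : α ∈ H := by simp [H]
  have mαα : α * α ∈ H := by simp [H]
  have mβ : β ∈ H := by simp [H]
  have mαβ : α * β ∈ H := by simp [H]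
  have mαβα : α * β * α ∈ H := by simp [H]
  set x := f α with hx
  set y := f β with hy
  have h1 : f (α * α) = x * x := hf α mα α mα mαα
  have h2 : x * x * y = x := by
    have := hf (α * α) mαα β mβ (by rw [hrel]; exact mα)
    rw [hrel] at this
    rw [← h1, ← this]
  have h3 : f (α * β) = x * y := hf α mα β mβ mαβ
  have h4 : f (α * β * α) = x * y * x := by
    rw [hf (α * β) mαβ α mα mαβα, h3]
  have h5 : x * y * x = x := key_semigroup x y h2
  have h6 : f (α * β * α) = f α := by rw [h4, h5]
  exact hne (hinj mαβα mα h6)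

end Stmt3
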